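/- Under Assumptions 1 and 2 (and Assumption 3), for all sufficiently small λ ∈ (0,1] the iterates θ_t^λ are tight: sup_{t∈ℕ} P(|θ_t^λ| > n) → 0 as n → ∞. -/

import Mathlib

open MeasureTheory ProbabilityTheory Filter
open scoped RealInnerProductSpace ENNReal

/-- The stochastic gradient Langevin iteration
θ_{t+1} = θ_t − λ H(θ_t, Y_t) + √λ ξ_{t+1}, θ_0 = θ₀; here `ξ t` plays the role of
the noise variable ξ_{t+1} used in the step from time t to t+1. -/
noncomputable def sgld {d m : ℕ} {Ω : Type*}
    (H : EuclideanSpace ℝ (Fin d) → EuclideanSpace ℝ (Fin m) → EuclideanSpace ℝ (Fin d))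
    (Y : ℤ → Ω → EuclideanSpace ℝ (Fin m))
    (ξ : ℕ → Ω → EuclideanSpace ℝ (Fin d))
    (lam : ℝ) (θ₀ : EuclideanSpace ℝ (Fin d)) : ℕ → Ω → EuclideanSpace ℝ (Fin d)
  | 0 => fun _ => θ₀
  | (t + 1) => fun ω =>
      sgld H Y ξ lam θ₀ t ω - lam • H (sgld H Y ξ lam θ₀ t ω) (Y (t : ℤ) ω)
        + Real.sqrt lam • ξ t ω

set_option maxHeartbeats 1000000

lemma young_norm {E : Type*} [NormedAddCommGroup E] (u v : E) {ε : ℝ} (hε : 0 < ε) :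
    ‖u + v‖ ^ 2 ≤ (1 + ε) * ‖u‖ ^ 2 + (1 + 1/ε) * ‖v‖ ^ 2 := by
  have h2 : ‖u + v‖ ^ 2 ≤ (‖u‖ + ‖v‖) ^ 2 :=
    pow_le_pow_left₀ (norm_nonneg _) (norm_add_le u v) 2
  have h3 : 0 ≤ ‖u‖ := norm_nonneg u
  have h4 : 0 ≤ ‖v‖ := norm_nonneg v
  have h5 : ε * (1/ε) = 1 := by field_simp
  nlinarith [sq_nonneg (ε * ‖u‖ - ‖v‖), mul_pos hε hε]

lemma sgld_step_bound {E : Type*} [NormedAddCommGroup E] [InnerProductSpace ℝ E]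
    {lam Δ K₁ K₂ K₃ bY Yn : ℝ} (hΔ : 0 < Δ) (hlam : 0 < lam) (hlam1 : lam ≤ 1)
    (hlam0 : lam * (6*K₁^2 + 3*Δ*K₁^2 + 1) ≤ Δ)
    (hbY : 0 ≤ bY) (hYn : 0 ≤ Yn) (hK₁ : 0 ≤ K₁) (hK₂Yn : 0 ≤ K₂*Yn) (hK₃ : 0 ≤ K₃)
    (a x h : E)
    (hdis : ⟪h, a⟫ ≥ Δ * ‖a‖^2 - bY)
    (hgr : ‖h‖ ≤ K₁*‖a‖ + K₂*Yn + K₃) :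
    ‖a - lam • h + Real.sqrt lam • x‖^2 ≤ (1 - lam*Δ) * ‖a‖^2 +
      ((1+Δ/2)*(2*bY + 3*K₂^2*Yn^2 + 3*K₃^2) + (1+2/(lam*Δ))*‖x‖^2) := by
  set ε : ℝ := lam*Δ/2 with hεdef
  have hε : 0 < ε := by positivity
  have A := young_norm (a - lam•h) (Real.sqrt lam • x) hε
  have hx2 : ‖Real.sqrt lam • x‖^2 = lam * ‖x‖^2 := by
    rw [norm_smul, Real.norm_eq_abs, abs_of_nonneg (Real.sqrt_nonneg _), mul_pow,
      Real.sq_sqrt hlam.le]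
  have B : ‖a - lam•h‖^2 = ‖a‖^2 - 2*lam*⟪h,a⟫ + lam^2*‖h‖^2 := by
    rw [norm_sub_sq_real, real_inner_smul_right, norm_smul, real_inner_comm,
      Real.norm_eq_abs, mul_pow, sq_abs]
    ring
  have C : ‖h‖^2 ≤ 3*(K₁^2*‖a‖^2 + K₂^2*Yn^2 + K₃^2) := by
    nlinarith [norm_nonneg h, norm_nonneg a, sq_nonneg (K₁*‖a‖ - K₂*Yn),
      sq_nonneg (K₁*‖a‖ - K₃), sq_nonneg (K₂*Yn - K₃), mul_nonneg hK₁ (norm_nonneg a)]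
  have D : ‖a - lam•h‖^2 ≤ (1 - 2*lam*Δ + 3*lam^2*K₁^2)*‖a‖^2
      + (2*lam*bY + 3*lam^2*(K₂^2*Yn^2+K₃^2)) := by
    have h1 : lam^2*‖h‖^2 ≤ lam^2*(3*(K₁^2*‖a‖^2 + K₂^2*Yn^2 + K₃^2)) :=
      mul_le_mul_of_nonneg_left C (sq_nonneg lam)
    have h2 : (2*lam)*(Δ * ‖a‖^2 - bY) ≤ (2*lam)*⟪h,a⟫ :=
      mul_le_mul_of_nonneg_left hdis (by positivity)
    rw [B]; nlinarith
  have coefbound : (1+ε)*(1 - 2*lam*Δ + 3*lam^2*K₁^2) ≤ 1 - lam*Δ := by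
    have key : lam*(6*K₁^2 + 3*lam*Δ*K₁^2) ≤ Δ := by
      nlinarith [hlam0, mul_nonneg (mul_nonneg (mul_nonneg hlam.le hΔ.le) (sq_nonneg K₁))
        (sub_nonneg.mpr hlam1), hlam.le]
    have key2 : (lam/2) * (lam*(6*K₁^2 + 3*lam*Δ*K₁^2)) ≤ (lam/2) * Δ :=
      mul_le_mul_of_nonneg_left key (by positivity)
    have key3 : (0:ℝ) ≤ lam^2*Δ^2 := by positivity
    rw [hεdef]; nlinarith [key2, key3]
  have hnn : (0:ℝ) ≤ 1 + ε := by positivity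
  have E1 : (1+ε) * ‖a - lam•h‖^2 ≤ (1+ε)*((1 - 2*lam*Δ + 3*lam^2*K₁^2)*‖a‖^2
      + (2*lam*bY + 3*lam^2*(K₂^2*Yn^2+K₃^2))) := mul_le_mul_of_nonneg_left D hnn
  have E2 : ((1+ε)*(1 - 2*lam*Δ + 3*lam^2*K₁^2))*‖a‖^2 ≤ (1-lam*Δ)*‖a‖^2 :=
    mul_le_mul_of_nonneg_right coefbound (sq_nonneg _)
  have hεle : ε ≤ Δ/2 := by rw [hεdef]; nlinarith
  have E3 : (1+ε)*(2*lam*bY + 3*lam^2*(K₂^2*Yn^2+K₃^2))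
      ≤ (1+Δ/2)*(2*bY + 3*K₂^2*Yn^2 + 3*K₃^2) := by
    have hl2 : lam^2 ≤ 1 := by nlinarith
    have t1 : 2*lam*bY ≤ 2*bY := by nlinarith
    have t2 : 3*lam^2*(K₂^2*Yn^2+K₃^2) ≤ 3*(K₂^2*Yn^2+K₃^2) := by nlinarith [sq_nonneg (K₂*Yn), sq_nonneg K₃]
    nlinarith [sq_nonneg (K₂*Yn), sq_nonneg K₃, mul_nonneg hlam.le hbY]
  have E4 : (1 + 1/ε) * ‖Real.sqrt lam • x‖^2 ≤ (1+2/(lam*Δ))*‖x‖^2 := by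
    rw [hx2]
    have hinv : 1/ε = 2/(lam*Δ) := by
      rw [hεdef, one_div_div]
    rw [hinv]
    have hxx : (0:ℝ) ≤ ‖x‖^2 := sq_nonneg _
    have key : (1 + 2/(lam*Δ)) * lam ≤ 1 + 2/(lam*Δ) := by
      have : 0 < 1 + 2/(lam*Δ) := by positivity
      nlinarith
    calc (1 + 2/(lam*Δ)) * (lam * ‖x‖^2) = ((1 + 2/(lam*Δ)) * lam) * ‖x‖^2 := by ring
      _ ≤ (1 + 2/(lam*Δ)) * ‖x‖^2 := mul_le_mul_of_nonneg_right key hxx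
  calc ‖a - lam•h + Real.sqrt lam • x‖^2
      ≤ (1+ε)*‖a - lam•h‖^2 + (1+1/ε)*‖Real.sqrt lam • x‖^2 := A
    _ ≤ (1 - lam*Δ) * ‖a‖^2 + ((1+Δ/2)*(2*bY + 3*K₂^2*Yn^2 + 3*K₃^2)
        + (1+2/(lam*Δ))*‖x‖^2) := by linarith [E1, E2, E3, E4]

/-- Lemma 1 of the paper: under Assumptions 1–3, for all sufficiently
small λ ∈ (0,1] the SGLD iterates are tight:
sup_{t∈ℕ} P(|θ_t^λ| > n) → 0 as n → ∞. -/
theorem sgld_tightness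
    {d m : ℕ} (hd : 0 < d) (hm : 0 < m)
    {Ω : Type*} [MeasurableSpace Ω] (P : Measure Ω) [IsProbabilityMeasure P]
    (H : EuclideanSpace ℝ (Fin d) → EuclideanSpace ℝ (Fin m) → EuclideanSpace ℝ (Fin d))
    (hH : Measurable (Function.uncurry H))
    -- the data process: strictly stationary, measurable
    (Y : ℤ → Ω → EuclideanSpace ℝ (Fin m)) (hYmeas : ∀ k, Measurable (Y k))
    (hstat : Measure.map (fun ω => fun k : ℤ => Y (k + 1) ω) P
      = Measure.map (fun ω => fun k : ℤ => Y k ω) P)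
    -- the noise process: i.i.d., independent coordinates, mean 0, second moment σ²,
    -- independent of the data process
    (ξ : ℕ → Ω → EuclideanSpace ℝ (Fin d)) (hξmeas : ∀ i, Measurable (ξ i))
    (hindep : iIndepFun ξ P)
    (hident : ∀ i, Measure.map (ξ i) P = Measure.map (ξ 0) P)
    (hcoord : ∀ i, iIndepFun (fun (j : Fin d) ω => ξ i ω j) P)
    (hξint : Integrable (ξ 0) P) (hmean : ∫ ω, ξ 0 ω ∂P = 0)
    (σsq : ℝ) (hξsqint : Integrable (fun ω => ‖ξ 0 ω‖ ^ 2) P)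
    (hsec : ∫ ω, ‖ξ 0 ω‖ ^ 2 ∂P = σsq)
    (hξYindep : IndepFun (fun ω => fun i : ℕ => ξ i ω) (fun ω => fun k : ℤ => Y k ω) P)
    -- Assumption 1 (dissipativity)
    (Δ : ℝ) (hΔ : 0 < Δ) (b : EuclideanSpace ℝ (Fin m) → ℝ)
    (hb : Measurable b) (hbnn : ∀ y, 0 ≤ b y)
    (hdissip : ∀ θ y, ⟪H θ y, θ⟫ ≥ Δ * ‖θ‖ ^ 2 - b y)
    -- Assumption 2 (growth)
    (K₁ K₂ K₃ : ℝ) (hK₁ : 0 < K₁) (hK₂ : 0 < K₂) (hK₃ : 0 < K₃) (β : ℝ) (hβ : 1 ≤ β)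
    (hgrowth : ∀ θ y, ‖H θ y‖ ≤ K₁ * ‖θ‖ + K₂ * ‖y‖ ^ β + K₃)
    -- Assumption 3 (moments)
    (My Mb : ℝ)
    (hMy : ∫⁻ ω, ENNReal.ofReal (‖Y 0 ω‖ ^ (2 * β)) ∂P ≤ ENNReal.ofReal My)
    (hMb : ∫⁻ ω, ENNReal.ofReal (b (Y 0 ω)) ∂P ≤ ENNReal.ofReal Mb) :
    ∃ lam₀ > (0 : ℝ), ∀ lam : ℝ, 0 < lam → lam ≤ lam₀ → lam ≤ 1 →
      ∀ θ₀ : EuclideanSpace ℝ (Fin d),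
        Tendsto (fun n : ℕ => ⨆ t : ℕ, P {ω | (n : ℝ) < ‖sgld H Y ξ lam θ₀ t ω‖})
          atTop (nhds 0) := by
  classical
  refine ⟨min (1/(Δ+1)) (Δ/(6*K₁^2+3*Δ*K₁^2+1)), lt_min (by positivity) (by positivity),
    fun lam hlam hlamle hlam1 θ₀ => ?_⟩
  have hlam0 : lam * (6*K₁^2 + 3*Δ*K₁^2 + 1) ≤ Δ := by
    have h := le_trans hlamle (min_le_right _ _)
    have hden : (0:ℝ) < 6*K₁^2+3*Δ*K₁^2+1 := by positivity
    calc lam * (6*K₁^2+3*Δ*K₁^2+1) ≤ (Δ/(6*K₁^2+3*Δ*K₁^2+1)) * (6*K₁^2+3*Δ*K₁^2+1) :=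
          mul_le_mul_of_nonneg_right h hden.le
      _ = Δ := by field_simp
  have hlamΔ : lam * Δ ≤ Δ/(Δ+1) := by
    have h := le_trans hlamle (min_le_left _ _)
    have : lam * Δ ≤ (1/(Δ+1)) * Δ := mul_le_mul_of_nonneg_right h hΔ.le
    calc lam * Δ ≤ (1/(Δ+1)) * Δ := this
      _ = Δ/(Δ+1) := by ring
  have hlamΔ1 : lam * Δ < 1 := lt_of_le_of_lt hlamΔ (by
    rw [div_lt_one (by positivity)]; linarith)
  have hlamΔpos : 0 < lam * Δ := mul_pos hlam hΔ
  have h1m : (0:ℝ) ≤ 1 - lam*Δ := by linarith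
  set θ : ℕ → Ω → EuclideanSpace ℝ (Fin d) := sgld H Y ξ lam θ₀ with hθ
  -- measurability of iterates
  have meas : ∀ t, Measurable (θ t) := by
    intro t
    induction t with
    | zero => exact measurable_const
    | succ t ih =>
      have h1 : Measurable fun ω => H (θ t ω) (Y (t:ℤ) ω) :=
        hH.comp (ih.prodMk (hYmeas (t:ℤ)))
      exact (ih.sub (h1.const_smul lam)).add ((hξmeas t).const_smul (Real.sqrt lam))
  -- stationarity transfer
  have hYmap : ∀ k : ℤ, Measure.map (Y (k+1)) P = Measure.map (Y k) P := by
    intro k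
    have h1 : Measurable (fun ω => fun k : ℤ => Y k ω) := measurable_pi_lambda _ hYmeas
    have h2 : Measurable (fun ω => fun k : ℤ => Y (k+1) ω) :=
      measurable_pi_lambda _ (fun k => hYmeas _)
    have h3 := congrArg (Measure.map (fun f : ℤ → EuclideanSpace ℝ (Fin m) => f k)) hstat
    rwa [Measure.map_map (measurable_pi_apply k) h2,
      Measure.map_map (measurable_pi_apply k) h1] at h3
  have hYt : ∀ t : ℕ, Measure.map (Y (t:ℤ)) P = Measure.map (Y 0) P := by
    intro t
    induction t with
    | zero => norm_num
    | succ n ih =>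
      have h := hYmap (n:ℤ)
      have hc : ((n+1:ℕ):ℤ) = (n:ℤ)+1 := by push_cast; ring
      rw [hc, h, ih]
  have hYlint : ∀ (g : EuclideanSpace ℝ (Fin m) → ℝ≥0∞), Measurable g → ∀ t : ℕ,
      ∫⁻ ω, g (Y (t:ℤ) ω) ∂P = ∫⁻ ω, g (Y 0 ω) ∂P := by
    intro g hg t
    rw [← lintegral_map hg (hYmeas (t:ℤ)), hYt t, lintegral_map hg (hYmeas 0)]
  have hξlint : ∀ t : ℕ,
      ∫⁻ ω, ENNReal.ofReal (‖ξ t ω‖^2) ∂P = ENNReal.ofReal σsq := by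
    intro t
    have hg : Measurable fun v : EuclideanSpace ℝ (Fin d) => ENNReal.ofReal (‖v‖^2) :=
      (measurable_norm.pow_const 2).ennreal_ofReal
    have h1 : ∫⁻ ω, ENNReal.ofReal (‖ξ t ω‖^2) ∂P = ∫⁻ ω, ENNReal.ofReal (‖ξ 0 ω‖^2) ∂P := by
      rw [← lintegral_map hg (hξmeas t), hident t, lintegral_map hg (hξmeas 0)]
    rw [h1, ← hsec, ofReal_integral_eq_lintegral_ofReal hξsqint
      (Filter.Eventually.of_forall fun ω => sq_nonneg _)]
  have σnn : 0 ≤ σsq := hsec ▸ integral_nonneg fun ω => sq_nonneg _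
  -- constants
  set Cb : ℝ := 2*(1+Δ/2) with hCb
  set Cy : ℝ := 3*(1+Δ/2)*K₂^2 with hCy
  set C0 : ℝ := 3*(1+Δ/2)*K₃^2 with hC0
  set Cx : ℝ := 1+2/(lam*Δ) with hCx
  have hCbnn : 0 ≤ Cb := by rw [hCb]; positivity
  have hCynn : 0 ≤ Cy := by rw [hCy]; positivity
  have hC0nn : 0 ≤ C0 := by rw [hC0]; positivity
  have hCxnn : 0 ≤ Cx := by rw [hCx]; positivity
  set C : ℝ := Cb*(max Mb 0) + Cy*(max My 0) + C0 + Cx*σsq with hC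
  have hCnn : 0 ≤ C := by
    rw [hC]
    have := le_max_right Mb (0:ℝ); have := le_max_right My (0:ℝ)
    positivity
  set R : ℝ := ‖θ₀‖^2 + C/(lam*Δ) with hR
  have hRnn : 0 ≤ R := add_nonneg (sq_nonneg _) (div_nonneg hCnn hlamΔpos.le)
  -- rpow square
  have rpow2 : ∀ y : EuclideanSpace ℝ (Fin m), (‖y‖^β)^2 = ‖y‖^(2*β) := by
    intro y
    rw [← Real.rpow_natCast (‖y‖^β) 2, ← Real.rpow_mul (norm_nonneg y)]
    norm_num [mul_comm]
  have h2β : (0:ℝ) ≤ 2*β := by linarith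
  have mrp : Measurable fun y : EuclideanSpace ℝ (Fin m) => ‖y‖^(2*β) :=
    (Real.continuous_rpow_const h2β).measurable.comp measurable_norm
  -- the uniform moment bound
  have moment : ∀ t, ∫⁻ ω, ENNReal.ofReal (‖θ t ω‖^2) ∂P ≤ ENNReal.ofReal R := by
    intro t
    induction t with
    | zero =>
      have : (fun ω => ENNReal.ofReal (‖θ 0 ω‖^2)) = fun _ => ENNReal.ofReal (‖θ₀‖^2) := by
        funext ω; simp [hθ, sgld]
      rw [this, lintegral_const, measure_univ, mul_one]
      exact ENNReal.ofReal_le_ofReal (by rw [hR]; nlinarith [div_nonneg hCnn hlamΔpos.le])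
    | succ t ih =>
      -- pointwise bound
      have ptwise : ∀ ω, ‖θ (t+1) ω‖^2 ≤ (1-lam*Δ)*‖θ t ω‖^2 +
          (Cb*(b (Y (t:ℤ) ω)) + Cy*(‖Y (t:ℤ) ω‖^(2*β)) + C0 + Cx*‖ξ t ω‖^2) := by
        intro ω
        have key := sgld_step_bound (E := EuclideanSpace ℝ (Fin d)) hΔ hlam hlam1 hlam0
          (hbnn (Y (t:ℤ) ω)) (Real.rpow_nonneg (norm_nonneg _) β) hK₁.le
          (mul_nonneg hK₂.le (Real.rpow_nonneg (norm_nonneg _) β)) hK₃.le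
          (θ t ω) (ξ t ω) (H (θ t ω) (Y (t:ℤ) ω))
          (hdissip (θ t ω) (Y (t:ℤ) ω)) (hgrowth (θ t ω) (Y (t:ℤ) ω))
        have hunfold : θ (t+1) ω = θ t ω - lam • H (θ t ω) (Y (t:ℤ) ω)
            + Real.sqrt lam • ξ t ω := by simp [hθ, sgld]
        rw [hunfold]
        calc ‖θ t ω - lam • H (θ t ω) (Y (t:ℤ) ω) + Real.sqrt lam • ξ t ω‖^2
            ≤ (1 - lam*Δ) * ‖θ t ω‖^2 + ((1+Δ/2)*(2*(b (Y (t:ℤ) ω))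
              + 3*K₂^2*(‖Y (t:ℤ) ω‖^β)^2 + 3*K₃^2) + (1+2/(lam*Δ))*‖ξ t ω‖^2) := key
          _ = (1-lam*Δ)*‖θ t ω‖^2 + (Cb*(b (Y (t:ℤ) ω)) + Cy*(‖Y (t:ℤ) ω‖^(2*β))
              + C0 + Cx*‖ξ t ω‖^2) := by rw [rpow2, hCb, hCy, hC0, hCx]; ring
      -- nonnegativity of pieces
      have gnn : ∀ ω, 0 ≤ Cb*(b (Y (t:ℤ) ω)) + Cy*(‖Y (t:ℤ) ω‖^(2*β)) + C0 + Cx*‖ξ t ω‖^2 := by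
        intro ω
        have h1 := hbnn (Y (t:ℤ) ω)
        have h2 : 0 ≤ ‖Y (t:ℤ) ω‖^(2*β) := Real.rpow_nonneg (norm_nonneg _) _
        have h3 : 0 ≤ ‖ξ t ω‖^2 := sq_nonneg _
        positivity
      -- measurability of pieces
      have mb : Measurable fun ω => ENNReal.ofReal (Cb * b (Y (t:ℤ) ω)) :=
        ((measurable_const.mul (hb.comp (hYmeas (t:ℤ))))).ennreal_ofReal
      have my2 : Measurable fun ω => ENNReal.ofReal (Cy * ‖Y (t:ℤ) ω‖^(2*β)) :=
        (measurable_const.mul (mrp.comp (hYmeas (t:ℤ)))).ennreal_ofReal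
      have mx : Measurable fun ω => ENNReal.ofReal (Cx * ‖ξ t ω‖^2) :=
        (measurable_const.mul (((hξmeas t).norm).pow_const 2)).ennreal_ofReal
      have mth : Measurable fun ω => ENNReal.ofReal ((1-lam*Δ) * ‖θ t ω‖^2) :=
        (measurable_const.mul (((meas t).norm).pow_const 2)).ennreal_ofReal
      -- main estimate
      calc ∫⁻ ω, ENNReal.ofReal (‖θ (t+1) ω‖^2) ∂P
          ≤ ∫⁻ ω, (ENNReal.ofReal ((1-lam*Δ)*‖θ t ω‖^2) + (ENNReal.ofReal (Cb*(b (Y (t:ℤ) ω)))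
            + ENNReal.ofReal (Cy*(‖Y (t:ℤ) ω‖^(2*β))) + ENNReal.ofReal C0
            + ENNReal.ofReal (Cx*‖ξ t ω‖^2))) ∂P := by
            apply lintegral_mono
            intro ω
            dsimp only
            have h2 : 0 ≤ ‖Y (t:ℤ) ω‖^(2*β) := Real.rpow_nonneg (norm_nonneg _) _
            have h1 := hbnn (Y (t:ℤ) ω)
            have h3 : 0 ≤ ‖ξ t ω‖^2 := sq_nonneg _
            rw [← ENNReal.ofReal_add (mul_nonneg hCbnn h1) (mul_nonneg hCynn h2),
              ← ENNReal.ofReal_add (by positivity) hC0nn,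
              ← ENNReal.ofReal_add (by positivity) (mul_nonneg hCxnn h3),
              ← ENNReal.ofReal_add (mul_nonneg h1m (sq_nonneg _)) (by positivity)]
            exact ENNReal.ofReal_le_ofReal (ptwise ω)
        _ = ∫⁻ ω, ENNReal.ofReal ((1-lam*Δ)*‖θ t ω‖^2) ∂P
            + (∫⁻ ω, ENNReal.ofReal (Cb*(b (Y (t:ℤ) ω))) ∂P
            + ∫⁻ ω, ENNReal.ofReal (Cy*(‖Y (t:ℤ) ω‖^(2*β))) ∂P
            + ∫⁻ ω, (ENNReal.ofReal C0 : ℝ≥0∞) ∂P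
            + ∫⁻ ω, ENNReal.ofReal (Cx*‖ξ t ω‖^2) ∂P) := by
            rw [lintegral_add_left mth, lintegral_add_left (f := fun ω => ENNReal.ofReal (Cb * b (Y (t:ℤ) ω)) + ENNReal.ofReal (Cy * ‖Y (t:ℤ) ω‖^(2*β)) + ENNReal.ofReal C0) ((mb.add my2).add measurable_const),
              lintegral_add_left (f := fun ω => ENNReal.ofReal (Cb * b (Y (t:ℤ) ω)) + ENNReal.ofReal (Cy * ‖Y (t:ℤ) ω‖^(2*β))) (mb.add my2), lintegral_add_left mb]
        _ ≤ ENNReal.ofReal (1-lam*Δ) * ENNReal.ofReal R + (ENNReal.ofReal Cb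
            * ENNReal.ofReal (max Mb 0) + ENNReal.ofReal Cy * ENNReal.ofReal (max My 0)
            + ENNReal.ofReal C0 + ENNReal.ofReal Cx * ENNReal.ofReal σsq) := by
            gcongr
            · -- θ term
              have : ∀ ω, ENNReal.ofReal ((1-lam*Δ)*‖θ t ω‖^2)
                  = ENNReal.ofReal (1-lam*Δ) * ENNReal.ofReal (‖θ t ω‖^2) := fun ω =>
                ENNReal.ofReal_mul h1m
              simp_rw [this]
              rw [lintegral_const_mul' _ _ ENNReal.ofReal_ne_top]
              exact mul_le_mul_right ih _
            · -- b term
              have : ∀ ω, ENNReal.ofReal (Cb * b (Y (t:ℤ) ω))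
                  = ENNReal.ofReal Cb * ENNReal.ofReal (b (Y (t:ℤ) ω)) := fun ω =>
                ENNReal.ofReal_mul hCbnn
              simp_rw [this]
              rw [lintegral_const_mul' _ _ ENNReal.ofReal_ne_top]
              apply mul_le_mul_right
              rw [hYlint (fun y => ENNReal.ofReal (b y)) hb.ennreal_ofReal t]
              calc ∫⁻ ω, ENNReal.ofReal (b (Y 0 ω)) ∂P ≤ ENNReal.ofReal Mb := hMb
                _ ≤ ENNReal.ofReal (max Mb 0) := ENNReal.ofReal_le_ofReal (le_max_left _ _)
            · -- Y moment term
              have : ∀ ω, ENNReal.ofReal (Cy * ‖Y (t:ℤ) ω‖^(2*β))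
                  = ENNReal.ofReal Cy * ENNReal.ofReal (‖Y (t:ℤ) ω‖^(2*β)) := fun ω =>
                ENNReal.ofReal_mul hCynn
              simp_rw [this]
              rw [lintegral_const_mul' _ _ ENNReal.ofReal_ne_top]
              apply mul_le_mul_right
              have hgm : Measurable fun y : EuclideanSpace ℝ (Fin m) =>
                  ENNReal.ofReal (‖y‖^(2*β)) := mrp.ennreal_ofReal
              rw [hYlint _ hgm t]
              calc ∫⁻ ω, ENNReal.ofReal (‖Y 0 ω‖^(2*β)) ∂P ≤ ENNReal.ofReal My := hMy
                _ ≤ ENNReal.ofReal (max My 0) := ENNReal.ofReal_le_ofReal (le_max_left _ _)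
            · -- constant term
              rw [lintegral_const, measure_univ, mul_one]
            · -- ξ term
              have : ∀ ω, ENNReal.ofReal (Cx * ‖ξ t ω‖^2)
                  = ENNReal.ofReal Cx * ENNReal.ofReal (‖ξ t ω‖^2) := fun ω =>
                ENNReal.ofReal_mul hCxnn
              simp_rw [this]
              rw [lintegral_const_mul' _ _ ENNReal.ofReal_ne_top, hξlint t]
        _ = ENNReal.ofReal ((1-lam*Δ)*R + C) := by
            rw [← ENNReal.ofReal_mul h1m, ← ENNReal.ofReal_mul hCbnn,
              ← ENNReal.ofReal_mul hCynn, ← ENNReal.ofReal_mul hCxnn,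
              ← ENNReal.ofReal_add (mul_nonneg hCbnn (le_max_right _ _))
                (mul_nonneg hCynn (le_max_right _ _)),
              ← ENNReal.ofReal_add (by positivity) hC0nn,
              ← ENNReal.ofReal_add (by positivity) (mul_nonneg hCxnn σnn),
              ← ENNReal.ofReal_add (mul_nonneg h1m hRnn) (by rw [← hC]; exact hCnn), hC]
        _ ≤ ENNReal.ofReal R := by
            apply ENNReal.ofReal_le_ofReal
            have hfix : lam*Δ * (C/(lam*Δ)) = C := by field_simp
            have : lam*Δ*R = lam*Δ*‖θ₀‖^2 + C := by rw [hR]; rw [mul_add, hfix]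
            nlinarith [mul_nonneg (mul_nonneg hlam.le hΔ.le) (sq_nonneg ‖θ₀‖)]
  -- conclude tightness via Markov's inequality
  have markov : ∀ (n : ℕ), 1 ≤ n → ∀ t : ℕ,
      P {ω | (n : ℝ) < ‖θ t ω‖} ≤ ENNReal.ofReal (R / (n:ℝ)^2) := by
    intro n hn t
    have hnpos : (0:ℝ) < (n:ℝ)^2 := by
      have : (1:ℝ) ≤ (n:ℝ) := by exact_mod_cast hn
      positivity
    have hsub : {ω | (n : ℝ) < ‖θ t ω‖}
        ⊆ {ω | ENNReal.ofReal ((n:ℝ)^2) ≤ ENNReal.ofReal (‖θ t ω‖^2)} := by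
      intro ω hω
      exact ENNReal.ofReal_le_ofReal (pow_le_pow_left₀ (Nat.cast_nonneg n) (le_of_lt hω) 2)
    have hmeas : AEMeasurable (fun ω => ENNReal.ofReal (‖θ t ω‖^2)) P :=
      (((meas t).norm.pow_const 2).ennreal_ofReal).aemeasurable
    calc P {ω | (n : ℝ) < ‖θ t ω‖}
        ≤ P {ω | ENNReal.ofReal ((n:ℝ)^2) ≤ ENNReal.ofReal (‖θ t ω‖^2)} := measure_mono hsub
      _ ≤ (∫⁻ ω, ENNReal.ofReal (‖θ t ω‖^2) ∂P) / ENNReal.ofReal ((n:ℝ)^2) :=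
          meas_ge_le_lintegral_div hmeas (by simp [ENNReal.ofReal_pos, hnpos]; omega)
            ENNReal.ofReal_ne_top
      _ ≤ (ENNReal.ofReal R) / ENNReal.ofReal ((n:ℝ)^2) :=
          ENNReal.div_le_div_right (moment t) _
      _ = ENNReal.ofReal (R / (n:ℝ)^2) := (ENNReal.ofReal_div_of_pos hnpos).symm
  have hub : Tendsto (fun n : ℕ => ENNReal.ofReal (R / (n:ℝ)^2)) atTop (nhds 0) := by
    have h1 : Tendsto (fun n : ℕ => R / (n:ℝ)^2) atTop (nhds 0) :=
      Tendsto.div_atTop tendsto_const_nhds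
        ((tendsto_pow_atTop (two_ne_zero)).comp tendsto_natCast_atTop_atTop)
    have := ENNReal.tendsto_ofReal h1
    simpa using this
  apply tendsto_of_tendsto_of_tendsto_of_le_of_le' tendsto_const_nhds hub
  · exact Filter.Eventually.of_forall fun n => zero_le
  · filter_upwards [Filter.eventually_ge_atTop 1] with n hn
    exact iSup_le fun t => markov n hn t
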